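/- arXiv:2510.01402 — 3 statements merged into one kernel-verified Lean document; each statement's English description precedes it below -/
import Mathlib

section
/- Let k_λ > 0, k_μ > 0, d_min > 0. Suppose d ≥ d_min, v > 0, and ψ ∈ ℝ satisfy v·cos ψ + k_λ·d·v·sin²ψ + k_μ·d = 0. Then v ≥ k_μ·d_min. -/
theorem stmt_1 (kl km dmin d v ψ : ℝ) (hkl : 0 < kl) (hkm : 0 < km)
    (hdmin : 0 < dmin) (hd : dmin ≤ d) (hv : 0 < v)
    (hb : v * Real.cos ψ + kl * d * v * (Real.sin ψ)^2 + km * d = 0) :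
    km * dmin ≤ v := by
  nlinarith [Real.neg_one_le_cos ψ, sq_nonneg (Real.sin ψ),
    mul_nonneg (mul_nonneg hkl.le (hdmin.trans_le hd).le) (mul_nonneg hv.le (sq_nonneg (Real.sin ψ)))]
end

section
/- Let k_λ > 0, k_μ > 0, d_min > 0, v_max > 0 with k_μ·d_min ≤ v_max. Suppose d ≥ d_min, 0 < v ≤ v_max, and ψ ∈ ℝ satisfy v·cos ψ + k_λ·d·v·sin²ψ + k_μ·d = 0. Then |sin ψ| ≤ √(1 − (k_μ·d_min/v_max)²). -/
theorem stmt_4 (kl km dmin vmax d v ψ : ℝ) (hkl : 0 < kl) (hkm : 0 < km)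
    (hdmin : 0 < dmin) (hvmax : 0 < vmax) (hle : km * dmin ≤ vmax)
    (hd : dmin ≤ d) (hv : 0 < v) (hvle : v ≤ vmax)
    (hb : v * Real.cos ψ + kl * d * v * (Real.sin ψ)^2 + km * d = 0) :
    |Real.sin ψ| ≤ Real.sqrt (1 - (km * dmin / vmax)^2) := by
  set c := km * dmin / vmax with hc
  have hc0 : 0 ≤ c := by positivity
  have hd0 : 0 < d := lt_of_lt_of_le hdmin hd
  have hnn : 0 ≤ kl * d * v * Real.sin ψ ^ 2 := by positivity
  have h1 : v * Real.cos ψ ≤ -(km * d) := by linarith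
  have hcos : Real.cos ψ ≤ -c := by
    rw [hc, le_neg, div_le_iff₀ hvmax]
    have hcneg : Real.cos ψ ≤ 0 := by nlinarith
    nlinarith [mul_le_mul_of_nonpos_right hvle hcneg, mul_le_mul_of_nonneg_left hd hkm.le]
  have hsin : (Real.sin ψ)^2 ≤ 1 - c^2 := by
    have := Real.sin_sq_add_cos_sq ψ
    nlinarith [abs_nonneg (Real.cos ψ), neg_abs_le (Real.cos ψ)]
  calc |Real.sin ψ| = Real.sqrt ((Real.sin ψ)^2) := (Real.sqrt_sq_eq_abs _).symm
    _ ≤ Real.sqrt (1 - c^2) := Real.sqrt_le_sqrt hsin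
end

section
/- Let k_λ, k_μ, d_min, v_max > 0 with k_μ·d_min ≤ v_max. Define c = −k_μ·d_min/v_max. For any d ≥ d_min, 0 < v ≤ v_max, ψ ∈ ℝ satisfying v·cos ψ + k_λ·d·v·sin²ψ + k_μ·d = 0, the line-of-sight components ṽ_x = v·cos ψ and ṽ_y = v·sin ψ satisfy ṽ_x ≤ v·c < 0 and ṽ_y² ≤ v²·(1 − c²). -/
theorem stmt_12 (kl km dmin vmax d v ψ : ℝ) (hkl : 0 < kl) (hkm : 0 < km)
    (hdmin : 0 < dmin) (hvmax : 0 < vmax) (hle : km * dmin ≤ vmax)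
    (hd : dmin ≤ d) (hv : 0 < v) (hvle : v ≤ vmax)
    (hb : v * Real.cos ψ + kl * d * v * (Real.sin ψ)^2 + km * d = 0) :
    v * Real.cos ψ ≤ v * (-(km * dmin) / vmax) ∧
      v * (-(km * dmin) / vmax) < 0 ∧
      (v * Real.sin ψ)^2 ≤ v^2 * (1 - (-(km * dmin) / vmax)^2) := by
  have hs := Real.sin_sq_add_cos_sq ψ
  have h1 : v * Real.cos ψ ≤ -(km * dmin) := by
    nlinarith [sq_nonneg (Real.sin ψ), mul_pos hkl (hdmin.trans_le hd),
      mul_nonneg (mul_nonneg (le_of_lt hkl) (le_of_lt (hdmin.trans_le hd))) hv.le]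
  set c := km * dmin / vmax with hc_def
  have hcpos : 0 < c := by positivity
  have hcv : c * vmax = km * dmin := div_mul_cancel₀ _ hvmax.ne'
  have hrw : -(km * dmin) / vmax = -c := by rw [neg_div]
  rw [hrw]
  have hx : v * Real.cos ψ ≤ v * (-c) := by nlinarith
  have hcos : Real.cos ψ ≤ -c := le_of_mul_le_mul_left hx hv
  have hc1 : c ≤ 1 := by rw [hc_def, div_le_one hvmax]; exact hle
  refine ⟨hx, by nlinarith, ?_⟩
  have hcsq : c ^ 2 ≤ (Real.cos ψ) ^ 2 := by nlinarith
  nlinarith [sq_nonneg v]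
end
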